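/- For g ≥ 3 and d ≥ 3, urSp(2g)[d] := ker(urSp(2g) → Sp(2g,ℤ/dℤ)) is normally generated in urSp(2g) by X_{1,2}^d and Y_{1,1}^d, assuming (Bass–Milnor–Serre) that Γ_d(g) is normally generated in GL(g,ℤ) by E_{1,2}^d. -/

import Mathlib

open Matrix

/-- The standard symplectic form matrix `J = [[0, I],[-I, 0]]`. -/
def Jmat (g : ℕ) : Matrix (Fin g ⊕ Fin g) (Fin g ⊕ Fin g) ℤ := fromBlocks 0 1 (-1) 0

/-- `Sp(2g, ℤ)` as a set of integer matrices. -/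
def SpSet (g : ℕ) : Set (Matrix (Fin g ⊕ Fin g) (Fin g ⊕ Fin g) ℤ) :=
  {X | IsUnit X.det ∧ Xᵀ * Jmat g * X = Jmat g}

/-- `urSp(2g)`: symplectic matrices with vanishing lower-left `g × g` block. -/
def urSpSet (g : ℕ) : Set (Matrix (Fin g ⊕ Fin g) (Fin g ⊕ Fin g) ℤ) :=
  {X | X ∈ SpSet g ∧ X.toBlocks₂₁ = 0}

/-- The explicit description: matrices `[[A, B],[0, ᵗA⁻¹]]` with `A` unimodular and
`A⁻¹ * B` symmetric. -/
def urSpSet' (g : ℕ) : Set (Matrix (Fin g ⊕ Fin g) (Fin g ⊕ Fin g) ℤ) :=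
  {X | ∃ A B : Matrix (Fin g) (Fin g) ℤ, IsUnit A.det ∧ (A⁻¹ * B).IsSymm ∧
    X = fromBlocks A B 0 (A⁻¹)ᵀ}

/-- `S_{i,j}`: the symmetric matrix with `1` at `(i,j)` and `(j,i)` and `0` elsewhere
(just a `1` at `(i,i)` when `i = j`). -/
def Smat (g : ℕ) (i j : Fin g) : Matrix (Fin g) (Fin g) ℤ :=
  Matrix.of fun k l => if (k = i ∧ l = j) ∨ (k = j ∧ l = i) then 1 else 0

/-- The elementary matrix `E_{i,j} = I + ℰ_{i,j}`. -/
def Emat (g : ℕ) (i j : Fin g) : Matrix (Fin g) (Fin g) ℤ := 1 + Matrix.single i j 1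

/-- `F_i = I - 2 S_{i,i}`. -/
def Fmat (g : ℕ) (i : Fin g) : Matrix (Fin g) (Fin g) ℤ := 1 - 2 • Matrix.single i i 1

/-- `A_{i,j} = I + S_{i,j} - S_{i,i} - S_{j,j}`, the transposition permutation matrix. -/
def Amat (g : ℕ) (i j : Fin g) : Matrix (Fin g) (Fin g) ℤ :=
  1 + Smat g i j - Smat g i i - Smat g j j

/-- `Y_{i,j} = [[I, S_{i,j}],[0, I]]`. -/
def Ymat (g : ℕ) (i j : Fin g) : Matrix (Fin g ⊕ Fin g) (Fin g ⊕ Fin g) ℤ :=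
  fromBlocks 1 (Smat g i j) 0 1

/-- `X_{i,j} = [[E_{i,j}, 0],[0, ᵗE_{i,j}⁻¹]]` (the paper's `-E_{j,i}` denotes `ᵗE_{i,j}⁻¹`). -/
noncomputable def Xmat (g : ℕ) (i j : Fin g) : Matrix (Fin g ⊕ Fin g) (Fin g ⊕ Fin g) ℤ :=
  fromBlocks (Emat g i j) 0 0 ((Emat g i j)⁻¹)ᵀ

/-- `Z_i = [[F_i, 0],[0, F_i]]`. -/
def Zmat (g : ℕ) (i : Fin g) : Matrix (Fin g ⊕ Fin g) (Fin g ⊕ Fin g) ℤ :=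
  fromBlocks (Fmat g i) 0 0 (Fmat g i)

/-- `S_g = {[[I, B],[0, I]] : B symmetric}`. -/
def SgSet (g : ℕ) : Set (Matrix (Fin g ⊕ Fin g) (Fin g ⊕ Fin g) ℤ) :=
  {X | ∃ B : Matrix (Fin g) (Fin g) ℤ, B.IsSymm ∧ X = fromBlocks 1 B 0 1}

/-- `GL(g, ℤ)` as the set of integer matrices with unit determinant. -/
def GLSet (g : ℕ) : Set (Matrix (Fin g) (Fin g) ℤ) := {X | IsUnit X.det}

/-- The level-`d` principal congruence subgroup `Γ_d(g)` of `GL(g, ℤ)`. -/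
def GammaSet (d g : ℕ) : Set (Matrix (Fin g) (Fin g) ℤ) :=
  {X | IsUnit X.det ∧ X.map (fun a : ℤ => (a : ZMod d)) = 1}

/-- The normal closure of `S` in the group `U` (a subset of invertible matrices),
described as the set of products of `U`-conjugates of elements of `S` and their inverses. -/
def ncl {n : Type*} [Fintype n] [DecidableEq n]
    (U S : Set (Matrix n n ℤ)) : Set (Matrix n n ℤ) :=
  ↑(Submonoid.closure {m | ∃ u ∈ U, ∃ y ∈ S, m = u * y * u⁻¹ ∨ m = u * y⁻¹ * u⁻¹})

variable {g d : ℕ}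

abbrev M1 (g : ℕ) := Matrix (Fin g) (Fin g) ℤ
abbrev M2 (g : ℕ) := Matrix (Fin g ⊕ Fin g) (Fin g ⊕ Fin g) ℤ

def psiM (g : ℕ) (C : M1 g) : M2 g := fromBlocks 1 C 0 1

noncomputable def phiM (g : ℕ) (P : M1 g) : M2 g := fromBlocks P 0 0 (P⁻¹)ᵀ

lemma psiM_mul (C C' : M1 g) : psiM g C * psiM g C' = psiM g (C + C') := by
  simp [psiM, fromBlocks_multiply, add_comm]

lemma psiM_zero : psiM g 0 = 1 := by
  simpa [psiM] using (fromBlocks_one (l := Fin g) (m := Fin g) (α := ℤ))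

lemma psiM_pow (C : M1 g) (n : ℕ) : psiM g C ^ n = psiM g (n • C) := by
  induction n with
  | zero => simp [psiM_zero]
  | succ n ih => rw [pow_succ, ih, psiM_mul, succ_nsmul]

lemma psiM_inv (C : M1 g) : (psiM g C)⁻¹ = psiM g (-C) := by
  apply inv_eq_right_inv; rw [psiM_mul, add_neg_cancel, psiM_zero]

lemma phiM_mul (P Q : M1 g) : phiM g P * phiM g Q = phiM g (P * Q) := by
  simp [phiM, fromBlocks_multiply, Matrix.mul_inv_rev, transpose_mul]

lemma phiM_one : phiM g 1 = 1 := by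
  simpa [phiM] using (fromBlocks_one (l := Fin g) (m := Fin g) (α := ℤ))

lemma phiM_pow (P : M1 g) (n : ℕ) : phiM g P ^ n = phiM g (P ^ n) := by
  induction n with
  | zero => simp [phiM_one]
  | succ n ih => rw [pow_succ, ih, phiM_mul, pow_succ]

lemma phiM_inv (P : M1 g) (h : IsUnit P.det) : (phiM g P)⁻¹ = phiM g P⁻¹ := by
  apply inv_eq_right_inv; rw [phiM_mul, mul_nonsing_inv _ h, phiM_one]

lemma phiM_conj_psiM (P : M1 g) (h : IsUnit P.det) (C : M1 g) :
    phiM g P * psiM g C * (phiM g P)⁻¹ = psiM g (P * C * Pᵀ) := by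
  rw [phiM_inv _ h]
  simp only [phiM, psiM, fromBlocks_multiply, Matrix.mul_one, Matrix.one_mul,
    Matrix.mul_zero, Matrix.zero_mul, add_zero, zero_add,
    nonsing_inv_nonsing_inv _ h]
  rw [mul_nonsing_inv _ h, ← transpose_mul, mul_nonsing_inv _ h, transpose_one,
    Matrix.mul_assoc]

lemma mem_urSp_of (A B : M1 g) (hA : IsUnit A.det) (hs : (A⁻¹ * B).IsSymm) :
    fromBlocks A B 0 (A⁻¹)ᵀ ∈ urSpSet g := by
  have hright : fromBlocks A B 0 (A⁻¹)ᵀ * fromBlocks A⁻¹ (-(A⁻¹ * (B * Aᵀ))) 0 Aᵀ = 1 := by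
    rw [← fromBlocks_one]
    simp only [fromBlocks_multiply, Matrix.mul_zero, Matrix.zero_mul, add_zero, zero_add,
      mul_nonsing_inv _ hA, Matrix.mul_neg, mul_nonsing_inv_cancel_left _ _ hA,
      ← transpose_nonsing_inv, ← transpose_mul, nonsing_inv_mul _ hA, transpose_one]
    rw [neg_add_cancel]
    simp
  refine ⟨⟨isUnit_det_of_right_inverse hright, ?_⟩, toBlocks_fromBlocks₂₁ _ _ _ _⟩
  have hsymm : Aᵀ * (A⁻¹)ᵀ = 1 := by rw [← transpose_mul, nonsing_inv_mul _ hA, transpose_one]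
  simp only [Jmat, fromBlocks_transpose, fromBlocks_multiply, Matrix.mul_zero, Matrix.zero_mul,
    Matrix.mul_one, Matrix.one_mul, Matrix.mul_neg, Matrix.neg_mul, add_zero, zero_add,
    transpose_zero, transpose_transpose, neg_zero]
  rw [hsymm, nonsing_inv_mul _ hA, ← transpose_mul, hs.eq, neg_add_cancel]

lemma exists_blocks {X : M2 g} (hX : X ∈ urSpSet g) :
    ∃ A B : M1 g, IsUnit A.det ∧ (A⁻¹ * B).IsSymm ∧ X = fromBlocks A B 0 (A⁻¹)ᵀ := by
  obtain ⟨⟨hdet, hJ⟩, h21⟩ := hX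
  set A := X.toBlocks₁₁ with hA
  set B := X.toBlocks₁₂ with hB
  set D := X.toBlocks₂₂ with hD
  have hXeq : X = fromBlocks A B 0 D := by
    rw [← h21, hA, hB, hD, fromBlocks_toBlocks]
  rw [hXeq] at hJ
  simp only [Jmat, fromBlocks_transpose, fromBlocks_multiply, Matrix.mul_zero, Matrix.zero_mul,
    Matrix.mul_one, Matrix.one_mul, Matrix.mul_neg, Matrix.neg_mul, add_zero, zero_add,
    transpose_zero, neg_zero] at hJ
  have h12 : Aᵀ * D = 1 := by
    have := congrArg Matrix.toBlocks₁₂ hJ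
    simpa [Matrix.toBlocks_fromBlocks₁₂] using this
  have h21' : Dᵀ * A = 1 := by
    have := congrArg Matrix.toBlocks₂₁ hJ
    simp only [Matrix.toBlocks_fromBlocks₂₁] at this
    exact neg_injective this
  have h22 : -(Dᵀ * B) + Bᵀ * D = 0 := by
    have := congrArg Matrix.toBlocks₂₂ hJ
    simpa [Matrix.toBlocks_fromBlocks₂₂] using this
  have hAunit : IsUnit A.det := by
    have : IsUnit (Aᵀ).det := isUnit_det_of_right_inverse h12
    simpa [Matrix.det_transpose] using this
  have hDeq : D = (A⁻¹)ᵀ := by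
    have h : (Aᵀ)⁻¹ = D := inv_eq_right_inv h12
    rw [← h, transpose_nonsing_inv]
  refine ⟨A, B, hAunit, ?_, by rw [hXeq, hDeq]⟩
  show (A⁻¹ * B)ᵀ = A⁻¹ * B
  have : Bᵀ * D = Dᵀ * B := by linear_combination (norm := abel) h22
  rw [transpose_mul, ← hDeq, this, hDeq, transpose_transpose]

lemma urSp_det {X : M2 g} (hX : X ∈ urSpSet g) : IsUnit X.det := hX.1.1

lemma urSp_one : (1 : M2 g) ∈ urSpSet g := by
  have := mem_urSp_of (g := g) 1 0 (by simp) (by simp [Matrix.IsSymm])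
  simpa [fromBlocks_one] using this

lemma urSp_mul {X Y : M2 g} (hX : X ∈ urSpSet g) (hY : Y ∈ urSpSet g) :
    X * Y ∈ urSpSet g := by
  obtain ⟨⟨hdX, hJX⟩, h21X⟩ := hX
  obtain ⟨⟨hdY, hJY⟩, h21Y⟩ := hY
  refine ⟨⟨by rw [Matrix.det_mul]; exact hdX.mul hdY, ?_⟩, ?_⟩
  · rw [transpose_mul, Matrix.mul_assoc, Matrix.mul_assoc, ← Matrix.mul_assoc (Jmat g),
      ← Matrix.mul_assoc Xᵀ, ← Matrix.mul_assoc Xᵀ, hJX, ← Matrix.mul_assoc, hJY]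
  · ext i j
    simp only [Matrix.toBlocks₂₁, Matrix.of_apply, Matrix.mul_apply, Matrix.zero_apply]
    rw [Fintype.sum_sum_type]
    have hx : ∀ k, X (Sum.inr i) (Sum.inl k) = 0 := fun k => by
      have := congrFun (congrFun h21X i) k
      simpa [Matrix.toBlocks₂₁] using this
    have hy : ∀ k, Y (Sum.inr k) (Sum.inl j) = 0 := fun k => by
      have := congrFun (congrFun h21Y k) j
      simpa [Matrix.toBlocks₂₁] using this
    simp [hx, hy]

lemma urSp_inv {X : M2 g} (hX : X ∈ urSpSet g) : X⁻¹ ∈ urSpSet g := by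
  obtain ⟨A, B, hA, hs, rfl⟩ := exists_blocks hX
  have hBA : (B * Aᵀ).IsSymm := by
    have hABA : B * Aᵀ = A * (A⁻¹ * B) * Aᵀ := by
      rw [mul_nonsing_inv_cancel_left _ _ hA]
    show (B * Aᵀ)ᵀ = B * Aᵀ
    rw [hABA, transpose_mul, transpose_mul, transpose_transpose, hs.eq, ← Matrix.mul_assoc]
  have hinv : (fromBlocks A B 0 (A⁻¹)ᵀ)⁻¹ = fromBlocks A⁻¹ (-(A⁻¹ * (B * Aᵀ))) 0 Aᵀ := by
    apply inv_eq_right_inv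
    rw [← fromBlocks_one]
    simp only [fromBlocks_multiply, Matrix.mul_zero, Matrix.zero_mul, add_zero, zero_add,
      mul_nonsing_inv _ hA, Matrix.mul_neg, mul_nonsing_inv_cancel_left _ _ hA,
      ← transpose_nonsing_inv, ← transpose_mul, nonsing_inv_mul _ hA, transpose_one]
    rw [neg_add_cancel]
    simp
  rw [hinv]
  have h2 : (A⁻¹)ᵀ = (((A⁻¹)⁻¹)⁻¹)ᵀ := by rw [nonsing_inv_nonsing_inv _ hA]
  have h3 : Aᵀ = ((A⁻¹)⁻¹)ᵀ := by rw [nonsing_inv_nonsing_inv _ hA]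
  rw [h3]
  apply mem_urSp_of _ _ (isUnit_nonsing_inv_det _ hA)
  rw [nonsing_inv_nonsing_inv _ hA, Matrix.mul_neg, mul_nonsing_inv_cancel_left _ _ hA]
  show (-(B * Aᵀ))ᵀ = -(B * Aᵀ)
  rw [transpose_neg, hBA.eq]

def mapd (d : ℕ) {n : Type*} (X : Matrix n n ℤ) : Matrix n n (ZMod d) :=
  X.map (fun a : ℤ => (a : ZMod d))

lemma mapd_mul {n : Type*} [Fintype n] (X Y : Matrix n n ℤ) :
    mapd d (X * Y) = mapd d X * mapd d Y :=
  Matrix.map_mul (f := Int.castRingHom (ZMod d))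

lemma mapd_one {n : Type*} [DecidableEq n] : mapd d (1 : Matrix n n ℤ) = 1 :=
  Matrix.map_one _ (by simp) (by simp)

lemma mapd_inv {n : Type*} [Fintype n] [DecidableEq n] {X : Matrix n n ℤ}
    (hX : IsUnit X.det) (h : mapd d X = 1) : mapd d X⁻¹ = 1 := by
  have := congrArg (mapd d) (mul_nonsing_inv X hX)
  rw [mapd_mul, h, one_mul, mapd_one] at this
  exact this

lemma mapd_fromBlocks (A B C D : M1 g) :
    mapd d (fromBlocks A B C D) = fromBlocks (mapd d A) (mapd d B) (mapd d C) (mapd d D) :=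
  Matrix.fromBlocks_map A B C D _

lemma mapd_conj {n : Type*} [Fintype n] [DecidableEq n] {u y : Matrix n n ℤ}
    (hu : IsUnit u.det) (hy : mapd d y = 1) : mapd d (u * y * u⁻¹) = 1 := by
  rw [mapd_mul, mapd_mul, hy, mul_one, ← mapd_mul, mul_nonsing_inv _ hu, mapd_one]

lemma Smat_isSymm (i j : Fin g) : (Smat g i j).IsSymm := by
  show (Smat g i j)ᵀ = Smat g i j
  ext k l
  simp only [Matrix.transpose_apply, Smat, Matrix.of_apply]
  exact if_congr (by tauto) rfl rfl

lemma Epow {i j : Fin g} (h : i ≠ j) (n : ℕ) :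
    Emat g i j ^ n = 1 + (n : ℤ) • Matrix.single i j 1 := by
  induction n with
  | zero => simp
  | succ n ih =>
    rw [pow_succ, ih, Emat]
    have h0 : Matrix.single i j (1:ℤ) * Matrix.single i j 1 = 0 := by
      rw [Matrix.single_mul_single_of_ne (h := h.symm)]
    push_cast
    rw [add_smul, one_smul, mul_add, mul_one, add_mul, one_mul, smul_mul_assoc, h0,
      smul_zero, add_zero]
    abel

lemma Emat_isUnit {i j : Fin g} (h : i ≠ j) : IsUnit (Emat g i j).det := by
  apply isUnit_det_of_right_inverse (B := 1 - Matrix.single i j 1)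
  have h0 : Matrix.single i j (1:ℤ) * Matrix.single i j 1 = 0 := by
    rw [Matrix.single_mul_single_of_ne (h := h.symm)]
  rw [Emat, add_mul, mul_sub, mul_sub, h0]
  simp

lemma mapd_Epow {i j : Fin g} (h : i ≠ j) : mapd d (Emat g i j ^ d) = 1 := by
  rw [Epow h]
  ext k l
  simp only [mapd, Matrix.map_apply, Matrix.add_apply, Matrix.smul_apply, Matrix.one_apply,
    Matrix.single, Matrix.of_apply, smul_eq_mul]
  push_cast
  rw [ZMod.natCast_self]
  simp [Matrix.one_apply]

lemma mapd_smul_zero (C : M1 g) : mapd d ((d : ℤ) • C) = 0 := by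
  ext k l
  simp only [mapd, Matrix.map_apply, Matrix.smul_apply, smul_eq_mul, Matrix.zero_apply]
  push_cast
  rw [ZMod.natCast_self, zero_mul]

def gensetSp (g d : ℕ) (i0 i1 : Fin g) : Set (M2 g) :=
  {m | ∃ u ∈ urSpSet g, ∃ y ∈ ({Xmat g i0 i1 ^ d, Ymat g i0 i0 ^ d} : Set (M2 g)),
    m = u * y * u⁻¹ ∨ m = u * y⁻¹ * u⁻¹}

noncomputable def Ncl (g d : ℕ) (i0 i1 : Fin g) : Submonoid (M2 g) :=
  Submonoid.closure (gensetSp g d i0 i1)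

lemma phi_mem_urSp (P : M1 g) (hP : IsUnit P.det) : phiM g P ∈ urSpSet g :=
  mem_urSp_of P 0 hP (by simp [Matrix.IsSymm])

lemma Xpow_eq (i0 i1 : Fin g) (n : ℕ) : Xmat g i0 i1 ^ n = phiM g (Emat g i0 i1 ^ n) := by
  rw [← phiM_pow]; rfl

lemma Ypow_eq (i0 : Fin g) (n : ℕ) : Ymat g i0 i0 ^ n = psiM g ((n : ℤ) • Smat g i0 i0) := by
  have : Ymat g i0 i0 = psiM g (Smat g i0 i0) := rfl
  rw [this, psiM_pow, Nat.cast_smul_eq_nsmul]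

lemma S_diag_eq (i0 : Fin g) : Smat g i0 i0 = Matrix.single i0 i0 1 := by
  ext k l
  simp only [Smat, Matrix.of_apply, Matrix.single, or_self]
  exact if_congr (by tauto) rfl rfl

def vvT (g : ℕ) (v : Fin g → ℤ) : M1 g := Matrix.of fun k l => v k * v l

lemma mul_S_mul (P : M1 g) (i0 : Fin g) :
    P * Smat g i0 i0 * Pᵀ = vvT g (fun k => P k i0) := by
  ext k l
  rw [S_diag_eq]
  simp only [Matrix.mul_apply, Matrix.single, Matrix.of_apply, transpose_apply,
    vvT, mul_ite, ite_mul, mul_zero, zero_mul, mul_one, one_mul]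
  rw [Finset.sum_eq_single i0
    (by intro b _ hb
        have : (∑ x : Fin g, if i0 = x ∧ i0 = b then P k x else 0) = 0 :=
          Finset.sum_eq_zero (by intro a _; simp [Ne.symm hb])
        rw [this, zero_mul])
    (by simp)]
  rw [Finset.sum_eq_single i0 (by intro a _ ha; simp [Ne.symm ha]) (by simp)]
  simp

lemma conj_gen_mem {i0 i1 : Fin g} (P : M1 g) (hP : IsUnit P.det) (m : ℤ) :
    psiM g (m • ((d : ℤ) • vvT g (fun k => P k i0))) ∈ Ncl g d i0 i1 := by
  have hu : phiM g P ∈ urSpSet g := phi_mem_urSp P hP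
  have key : ∀ C : M1 g, phiM g P * psiM g C * (phiM g P)⁻¹ = psiM g (P * C * Pᵀ) :=
    fun C => phiM_conj_psiM P hP C
  have hsm : ∀ a : ℤ, P * (a • Smat g i0 i0) * Pᵀ = a • vvT g (fun k => P k i0) := by
    intro a
    rw [Matrix.mul_smul, Matrix.smul_mul, mul_S_mul]
  have hpos : psiM g ((d : ℤ) • vvT g (fun k => P k i0)) ∈ Ncl g d i0 i1 := by
    apply Submonoid.subset_closure
    refine ⟨phiM g P, hu, Ymat g i0 i0 ^ d, by simp, Or.inl ?_⟩
    rw [Ypow_eq, key, hsm]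
  have hneg : psiM g (-((d : ℤ) • vvT g (fun k => P k i0))) ∈ Ncl g d i0 i1 := by
    apply Submonoid.subset_closure
    refine ⟨phiM g P, hu, Ymat g i0 i0 ^ d, by simp, Or.inr ?_⟩
    rw [Ypow_eq, psiM_inv, key]
    rw [show P * -((d:ℤ) • Smat g i0 i0) * Pᵀ = -(P * ((d:ℤ) • Smat g i0 i0) * Pᵀ) by
      simp [Matrix.neg_mul, Matrix.mul_neg]]
    rw [hsm]
  rcases Int.natAbs_eq m with hm | hm
  · rw [hm, natCast_zsmul, ← psiM_pow]
    exact pow_mem hpos _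
  · rw [hm, neg_smul, natCast_zsmul, ← smul_neg, ← psiM_pow]
    exact pow_mem hneg _

lemma perm_isUnit (σ : Equiv.Perm (Fin g)) : IsUnit ((σ.permMatrix ℤ)).det := by
  rw [Matrix.det_permutation]
  exact (Equiv.Perm.sign σ).isUnit

lemma perm_col (σ : Equiv.Perm (Fin g)) (k l : Fin g) :
    (σ.permMatrix ℤ) k l = if σ k = l then 1 else 0 := by
  simp [Equiv.Perm.permMatrix, PEquiv.toMatrix, Equiv.toPEquiv, eq_comm]

lemma psi_S_diag_mem {i0 i1 : Fin g} (i : Fin g) (m : ℤ) :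
    psiM g (m • ((d : ℤ) • Smat g i i)) ∈ Ncl g d i0 i1 := by
  have h := conj_gen_mem (d := d) (i0 := i0) (i1 := i1)
    ((Equiv.swap i0 i).permMatrix ℤ) (perm_isUnit _) m
  have hv : vvT g (fun k => ((Equiv.swap i0 i).permMatrix ℤ) k i0) = Smat g i i := by
    ext k l
    simp only [vvT, Matrix.of_apply, perm_col, Smat]
    have hcol : ∀ a : Fin g, (Equiv.swap i0 i a = i0) = (a = i) := by
      intro a
      by_cases ha : a = i
      · subst ha; simp
      · simp only [eq_iff_iff, iff_false, ha]
        intro hcontra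
        have := (Equiv.swap i0 i).injective (a₂ := i) (by rw [hcontra]; simp)
        exact ha this
    simp only [hcol]
    by_cases hk : k = i <;> by_cases hl : l = i <;> simp_all
  rwa [hv] at h

set_option maxRecDepth 2000 in
lemma psi_S_mem {i0 i1 : Fin g} (i j : Fin g) (m : ℤ) :
    psiM g (m • ((d : ℤ) • Smat g i j)) ∈ Ncl g d i0 i1 := by
  by_cases hij : i = j
  · subst hij; exact psi_S_diag_mem i m
  · set P : M1 g := Emat g j i * (Equiv.swap i0 i).permMatrix ℤ with hP
    have hPu : IsUnit P.det := by
      rw [hP, Matrix.det_mul]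
      exact (Emat_isUnit (fun hc => hij hc.symm)).mul (perm_isUnit _)
    have hcol : ∀ k : Fin g, P k i0 = (if k = i then 1 else 0) + (if k = j then 1 else 0) := by
      intro k
      rw [hP]
      rw [Matrix.mul_apply]
      have hcl : ∀ a : Fin g, ((Equiv.swap i0 i) a = i0) = (a = i) := by
        intro a
        by_cases ha : a = i
        · subst ha; simp
        · simp only [eq_iff_iff, iff_false, ha]
          intro hcontra
          have := (Equiv.swap i0 i).injective (a₂ := i) (by rw [hcontra]; simp)
          exact ha this
      have : ∀ a : Fin g, Emat g j i k a * (Equiv.swap i0 i).permMatrix ℤ a i0 =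
          if a = i then Emat g j i k a else 0 := by
        intro a
        rw [perm_col]
        simp only [hcl]
        by_cases ha : a = i <;> simp [ha]
      simp only [this]
      rw [Finset.sum_ite_eq' Finset.univ i (fun a => Emat g j i k a)]
      simp only [Finset.mem_univ, if_true]
      rw [Emat]
      simp only [Matrix.add_apply, Matrix.one_apply, Matrix.single, Matrix.of_apply]
      congr 1
      exact if_congr ⟨fun h => h.1.symm, fun h => ⟨h.symm, trivial⟩⟩ rfl rfl
    have hv : vvT g (fun k => P k i0) = Smat g i i + Smat g j j + Smat g i j := by
      ext k l
      simp only [vvT, Matrix.of_apply, hcol, Matrix.add_apply, Smat]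
      by_cases hki : k = i <;> by_cases hkj : k = j <;>
        by_cases hli : l = i <;> by_cases hlj : l = j
      all_goals first
        | exact absurd (hki.symm.trans hkj) hij
        | exact absurd (hli.symm.trans hlj) hij
        | simp [hki, hkj, hli, hlj, hij, Ne.symm hij]
    have h := conj_gen_mem (d := d) (i0 := i0) (i1 := i1) P hPu m
    rw [hv] at h
    have hdec : m • ((d:ℤ) • Smat g i j) =
        (m • ((d:ℤ) • (Smat g i i + Smat g j j + Smat g i j))) +
        ((-m) • ((d:ℤ) • Smat g i i) + (-m) • ((d:ℤ) • Smat g j j)) := by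
      simp only [smul_add, neg_smul]
      abel
    rw [hdec, ← psiM_mul, ← psiM_mul]
    exact mul_mem h (mul_mem (psi_S_diag_mem i (-m)) (psi_S_diag_mem j (-m)))

lemma symm_decomp (Mx : M1 g) (hs : Mx.IsSymm) :
    Mx = ∑ p ∈ Finset.univ.filter (fun p : Fin g × Fin g => p.1 ≤ p.2),
      Mx p.1 p.2 • Smat g p.1 p.2 := by
  ext k l
  rw [Matrix.sum_apply]
  by_cases hkl : k ≤ l
  · rw [Finset.sum_eq_single (k, l)]
    · simp [Smat]
    · intro p hp hne
      simp only [Finset.mem_filter, Finset.mem_univ, true_and] at hp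
      simp only [Matrix.smul_apply, Smat, Matrix.of_apply, smul_eq_mul]
      by_cases hc : (k = p.1 ∧ l = p.2) ∨ (k = p.2 ∧ l = p.1)
      · exfalso
        rcases hc with ⟨h1, h2⟩ | ⟨h1, h2⟩
        · exact hne (Prod.ext h1.symm h2.symm)
        · have hlk : l ≤ k := h2 ▸ h1 ▸ hp
          have hkl' : k = l := le_antisymm hkl hlk
          exact hne (Prod.ext (h2.symm.trans hkl'.symm) (h1.symm.trans hkl'))
      · simp [hc]
    · intro h
      exact absurd (by simp [hkl]) h
  · have hlk : l ≤ k := le_of_not_ge hkl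
    rw [Finset.sum_eq_single (l, k)]
    · have h2 : Mx l k = Mx k l := hs.apply k l
      have hlkne : ¬ (l = k) := fun h => hkl (le_of_eq h.symm)
      simp only [Matrix.smul_apply, Smat, Matrix.of_apply, smul_eq_mul]
      rw [if_pos (by tauto), mul_one, h2]
    · intro p hp hne
      simp only [Finset.mem_filter, Finset.mem_univ, true_and] at hp
      simp only [Matrix.smul_apply, Smat, Matrix.of_apply, smul_eq_mul]
      by_cases hc : (k = p.1 ∧ l = p.2) ∨ (k = p.2 ∧ l = p.1)
      · exfalso
        rcases hc with ⟨h1, h2⟩ | ⟨h1, h2⟩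
        · have : k ≤ l := h1 ▸ h2 ▸ hp
          exact hkl this
        · exact hne (Prod.ext h2.symm h1.symm)
      · simp [hc]
    · intro h
      exact absurd (by simp [hlk]) h

lemma psiM_mem_of {i0 i1 : Fin g} (hd0 : d ≠ 0) (C : M1 g) (hs : C.IsSymm)
    (h0 : mapd d C = 0) : psiM g C ∈ Ncl g d i0 i1 := by
  haveI : NeZero d := ⟨hd0⟩
  have hdvd : ∀ k l, (d : ℤ) ∣ C k l := by
    intro k l
    have := congrFun (congrFun h0 k) l
    simpa [mapd, ZMod.intCast_zmod_eq_zero_iff_dvd] using this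
  set Mx : M1 g := Matrix.of (fun k l => C k l / d) with hMx
  have hCM : ∀ k l, C k l = (d : ℤ) * Mx k l := by
    intro k l
    rw [hMx]
    simp only [Matrix.of_apply]
    rw [Int.mul_ediv_cancel' (hdvd k l)]
  have hMs : Mx.IsSymm := by
    show Mxᵀ = Mx
    ext k l
    simp only [Matrix.transpose_apply, hMx, Matrix.of_apply]
    rw [hs.apply l k]
  have hCsum : C = ∑ p ∈ Finset.univ.filter (fun p : Fin g × Fin g => p.1 ≤ p.2),
      Mx p.1 p.2 • ((d : ℤ) • Smat g p.1 p.2) := by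
    have h1 : C = (d : ℤ) • Mx := by ext k l; simp [hCM k l]
    rw [h1]
    conv_lhs => rw [symm_decomp Mx hMs]
    rw [Finset.smul_sum]
    exact Finset.sum_congr rfl (fun p _ => smul_comm _ _ _)
  rw [hCsum]
  refine Finset.sum_induction _ (fun X => psiM g X ∈ Ncl g d i0 i1) ?_ ?_ ?_
  · intro a b ha hb
    rw [← psiM_mul]
    exact mul_mem ha hb
  · show psiM g 0 ∈ Ncl g d i0 i1
    rw [psiM_zero]
    exact one_mem _
  · intro p _
    exact psi_S_mem p.1 p.2 _

lemma phi_of_gamma {i0 i1 : Fin g} (h01 : i0 ≠ i1) (A : M1 g)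
    (hA : A ∈ Submonoid.closure {m | ∃ u ∈ GLSet g, ∃ y ∈ ({Emat g i0 i1 ^ d} : Set (M1 g)),
      m = u * y * u⁻¹ ∨ m = u * y⁻¹ * u⁻¹}) :
    phiM g A ∈ Ncl g d i0 i1 := by
  induction hA using Submonoid.closure_induction with
  | one => rw [phiM_one]; exact one_mem _
  | mul a b _ _ ha hb => rw [← phiM_mul]; exact mul_mem ha hb
  | mem m hm =>
    obtain ⟨u, hu, y, hy, hcase⟩ := hm
    simp only [Set.mem_singleton_iff] at hy
    subst hy
    have hEu : IsUnit (Emat g i0 i1 ^ d).det := by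
      rw [Matrix.det_pow]; exact (Emat_isUnit h01).pow d
    have huu : IsUnit u.det := hu
    rcases hcase with rfl | rfl
    · rw [← phiM_mul, ← phiM_mul, ← phiM_inv u huu, ← Xpow_eq]
      exact Submonoid.subset_closure
        ⟨phiM g u, phi_mem_urSp u huu, _, Set.mem_insert _ _, Or.inl rfl⟩
    · rw [← phiM_mul, ← phiM_mul, ← phiM_inv u huu, ← phiM_inv _ hEu, ← Xpow_eq]
      exact Submonoid.subset_closure
        ⟨phiM g u, phi_mem_urSp u huu, _, Set.mem_insert _ _, Or.inr rfl⟩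

lemma mapd_zero {n : Type*} : mapd d (0 : Matrix n n ℤ) = 0 := by
  ext k l; simp [mapd]

lemma Xpow_mem_ker {i0 i1 : Fin g} (h01 : i0 ≠ i1) :
    Xmat g i0 i1 ^ d ∈ urSpSet g ∧ mapd d (Xmat g i0 i1 ^ d) = 1 := by
  have hEu : IsUnit (Emat g i0 i1 ^ d).det := by
    rw [Matrix.det_pow]; exact (Emat_isUnit h01).pow d
  constructor
  · rw [Xpow_eq]; exact phi_mem_urSp _ hEu
  · rw [Xpow_eq]
    show mapd d (fromBlocks _ 0 0 _) = 1
    rw [mapd_fromBlocks]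
    rw [show mapd d ((Emat g i0 i1 ^ d)⁻¹)ᵀ = (mapd d (Emat g i0 i1 ^ d)⁻¹)ᵀ from
      Matrix.transpose_map]
    rw [mapd_inv hEu (mapd_Epow h01), mapd_Epow h01, mapd_zero, transpose_one, fromBlocks_one]

lemma Ypow_mem_ker (i0 : Fin g) :
    Ymat g i0 i0 ^ d ∈ urSpSet g ∧ mapd d (Ymat g i0 i0 ^ d) = 1 := by
  rw [Ypow_eq]
  constructor
  · have h := mem_urSp_of (g := g) 1 ((d : ℤ) • Smat g i0 i0) (by simp)
      (by rw [inv_one, Matrix.one_mul]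
          show ((d : ℤ) • Smat g i0 i0)ᵀ = _
          rw [transpose_smul, (Smat_isSymm i0 i0).eq])
    rw [inv_one, transpose_one] at h
    exact h
  · show mapd d (fromBlocks 1 _ 0 1) = 1
    rw [mapd_fromBlocks, mapd_one, mapd_zero, mapd_smul_zero, fromBlocks_one]

lemma genset_sub_ker {i0 i1 : Fin g} (h01 : i0 ≠ i1) :
    gensetSp g d i0 i1 ⊆ {X : M2 g | X ∈ urSpSet g ∧ mapd d X = 1} := by
  rintro m ⟨u, hu, y, hy, hcase⟩
  have hyk : y ∈ urSpSet g ∧ mapd d y = 1 := by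
    rcases hy with rfl | hy
    · exact Xpow_mem_ker h01
    · rw [Set.mem_singleton_iff] at hy; subst hy; exact Ypow_mem_ker i0
  have hydet : IsUnit y.det := urSp_det hyk.1
  have hui : u⁻¹ ∈ urSpSet g := urSp_inv hu
  rcases hcase with rfl | rfl
  · exact ⟨urSp_mul (urSp_mul hu hyk.1) hui, mapd_conj (urSp_det hu) hyk.2⟩
  · exact ⟨urSp_mul (urSp_mul hu (urSp_inv hyk.1)) hui,
      mapd_conj (urSp_det hu) (mapd_inv hydet hyk.2)⟩

noncomputable def kerSub (g d : ℕ) : Submonoid (M2 g) where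
  carrier := {X | X ∈ urSpSet g ∧ mapd d X = 1}
  one_mem' := ⟨urSp_one, mapd_one⟩
  mul_mem' := fun ha hb => ⟨urSp_mul ha.1 hb.1, by rw [mapd_mul, ha.2, hb.2, one_mul]⟩


/-- For `g ≥ 3`, `d ≥ 3`: if `Γ_d(g)` is the normal closure of `E_{1,2}^d` in `GL(g, ℤ)`
(Bass–Milnor–Serre), then `urSp(2g)[d]` is the normal closure of `X_{1,2}^d` and
`Y_{1,1}^d` in `urSp(2g)`. -/
theorem stmt15 (g d : ℕ) (hg : 3 ≤ g) (hd : 3 ≤ d)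
    (hGamma : GammaSet d g = ncl (GLSet g) {Emat g ⟨0, by omega⟩ ⟨1, by omega⟩ ^ d}) :
    {X | X ∈ urSpSet g ∧ X.map (fun a : ℤ => (a : ZMod d)) = 1} =
      ncl (urSpSet g)
        {Xmat g ⟨0, by omega⟩ ⟨1, by omega⟩ ^ d,
         Ymat g ⟨0, by omega⟩ ⟨0, by omega⟩ ^ d} := by
  have h2g : 2 ≤ g := by omega
  set i0 : Fin g := ⟨0, by omega⟩ with hi0
  set i1 : Fin g := ⟨1, by omega⟩ with hi1
  have h01 : i0 ≠ i1 := by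
    rw [hi0, hi1]
    intro h
    exact absurd (congrArg Fin.val h) (by norm_num)
  ext X
  constructor
  · rintro ⟨hX, hmap⟩
    obtain ⟨A, B, hAu, hsymm, rfl⟩ := exists_blocks hX
    have hmap' : mapd d (fromBlocks A B 0 (A⁻¹)ᵀ) = fromBlocks 1 0 0 1 := by
      rw [fromBlocks_one]; exact hmap
    rw [mapd_fromBlocks, fromBlocks_inj] at hmap'
    obtain ⟨h11, h12, _, _⟩ := hmap'
    have hA_gamma : A ∈ GammaSet d g := ⟨hAu, h11⟩
    rw [hGamma] at hA_gamma
    have hphi : phiM g A ∈ Ncl g d i0 i1 := phi_of_gamma h01 A hA_gamma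
    have hABmap : mapd d (A⁻¹ * B) = 0 := by
      rw [mapd_mul, mapd_inv hAu h11, h12, one_mul]
    have hpsi : psiM g (A⁻¹ * B) ∈ Ncl g d i0 i1 :=
      psiM_mem_of (by omega) _ hsymm hABmap
    have hXeq : fromBlocks A B 0 (A⁻¹)ᵀ = phiM g A * psiM g (A⁻¹ * B) := by
      rw [phiM, psiM]
      rw [fromBlocks_multiply]
      rw [mul_nonsing_inv_cancel_left _ _ hAu]
      simp
    show fromBlocks A B 0 (A⁻¹)ᵀ ∈ (Ncl g d i0 i1 : Set (M2 g))
    rw [hXeq]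
    exact mul_mem hphi hpsi
  · intro hX
    have hle : Ncl g d i0 i1 ≤ kerSub g d :=
      Submonoid.closure_le.2 (genset_sub_ker h01)
    have hmem : X ∈ Ncl g d i0 i1 := hX
    exact hle hmem
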